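/- Let T be the bounded linear operator on the complex Hilbert space ℓ² = ℓ²(ℕ, ℂ) given by the unilateral weighted shift T x = ∑_{n=0}^{∞} e^{1/√(n+1)} x(n) e_{n+1}, where {e_n : n ∈ ℕ} is the canonical orthonormal basis of ℓ². Then for each k ≥ 1 the operator norm satisfies ‖T^k‖ = e^{∑_{j=1}^{k} 1/√j}, the spectral radius of T equals 1, and for every α ∈ (0, +∞) one has ‖T^k‖/k^α → +∞ as k → +∞; in particular, for no m ∈ ℕ is the sequence (‖T^n‖/n^m)_{n≥1} bounded from above. -/

import Mathlib

open Filter Finset Real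
open scoped ENNReal

noncomputable def stmt19S (k : ℕ) : ℝ := ∑ i ∈ Finset.range k, 1 / Real.sqrt ((i : ℝ) + 1)

noncomputable def stmt19c (k n : ℕ) : ℝ :=
  ∑ i ∈ Finset.range k, 1 / Real.sqrt ((n : ℝ) + (i : ℝ) + 1)

lemma stmt19S_nonneg (k : ℕ) : 0 ≤ stmt19S k :=
  Finset.sum_nonneg fun i _ => by positivity

lemma stmt19S_le (k : ℕ) : stmt19S k ≤ 2 * Real.sqrt k := by
  induction k with
  | zero => simp [stmt19S]
  | succ k ih =>
    have hb : (0:ℝ) < Real.sqrt (k+1) := Real.sqrt_pos.mpr (by positivity)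
    have ha : (0:ℝ) ≤ Real.sqrt k := Real.sqrt_nonneg _
    have hab : Real.sqrt (k:ℝ) ≤ Real.sqrt ((k:ℝ)+1) :=
      Real.sqrt_le_sqrt (by linarith)
    have hb2 : Real.sqrt ((k:ℝ)+1) ^ 2 = (k:ℝ)+1 := Real.sq_sqrt (by positivity)
    have ha2 : Real.sqrt (k:ℝ) ^ 2 = (k:ℝ) := Real.sq_sqrt (by positivity)
    have key : 1 / Real.sqrt ((k:ℝ)+1) ≤ 2 * (Real.sqrt ((k:ℝ)+1) - Real.sqrt k) := by
      rw [div_le_iff₀ hb]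
      nlinarith
    have : stmt19S (k+1) = stmt19S k + 1 / Real.sqrt ((k:ℝ)+1) := by
      simp [stmt19S, Finset.sum_range_succ]
    rw [this]
    push_cast
    linarith

lemma stmt19_sqrt_le_S (k : ℕ) : Real.sqrt k ≤ stmt19S k := by
  rcases Nat.eq_zero_or_pos k with h | h
  · simp [h, stmt19S]
  · have : ∀ i ∈ Finset.range k, 1 / Real.sqrt (k:ℝ) ≤ 1 / Real.sqrt ((i:ℝ)+1) := by
      intro i hi
      have hi' : (i:ℝ) + 1 ≤ (k:ℝ) := by
        have := Finset.mem_range.mp hi; exact_mod_cast this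
      have h1 : (0:ℝ) < Real.sqrt ((i:ℝ)+1) := Real.sqrt_pos.mpr (by positivity)
      exact one_div_le_one_div_of_le h1 (Real.sqrt_le_sqrt hi')
    have hsum := Finset.card_nsmul_le_sum (Finset.range k) _ _ this
    simp only [Finset.card_range, nsmul_eq_mul] at hsum
    calc Real.sqrt k = (k:ℝ) / Real.sqrt k := (Real.div_sqrt).symm
      _ = (k:ℝ) * (1 / Real.sqrt (k:ℝ)) := by ring
      _ ≤ stmt19S k := hsum

lemma stmt19c_le (k n : ℕ) : stmt19c k n ≤ stmt19S k := by
  apply Finset.sum_le_sum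
  intro i _
  have h1 : (0:ℝ) < Real.sqrt ((i:ℝ)+1) := Real.sqrt_pos.mpr (by positivity)
  exact one_div_le_one_div_of_le h1
    (Real.sqrt_le_sqrt (by linarith [show (0:ℝ) ≤ (n:ℝ) from n.cast_nonneg]))

lemma stmt19c_zero (k : ℕ) : stmt19c k 0 = stmt19S k := by simp [stmt19c, stmt19S]

lemma stmt19_sqrt_tendsto : Tendsto (fun k : ℕ => Real.sqrt k) atTop atTop := by
  have h1 : Tendsto Real.sqrt atTop atTop := by
    have : Real.sqrt = fun x : ℝ => x ^ (1/(2:ℝ)) := funext Real.sqrt_eq_rpow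
    rw [this]
    exact tendsto_rpow_atTop (by norm_num)
  exact h1.comp tendsto_natCast_atTop_atTop

lemma stmt19S_div_tendsto : Tendsto (fun n : ℕ => stmt19S n / n) atTop (nhds 0) := by
  have hub : Tendsto (fun n : ℕ => 2 / Real.sqrt n) atTop (nhds 0) :=
    Tendsto.div_atTop tendsto_const_nhds stmt19_sqrt_tendsto
  refine squeeze_zero' ?_ ?_ hub
  · filter_upwards [eventually_ge_atTop 1] with n hn
    exact div_nonneg (stmt19S_nonneg n) (by positivity)
  · filter_upwards [eventually_ge_atTop 1] with n hn
    have hn' : (0:ℝ) < n := by exact_mod_cast hn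
    calc stmt19S n / n ≤ 2 * Real.sqrt n / n := by gcongr; exact stmt19S_le n
      _ = 2 / Real.sqrt n := by
          rw [mul_div_assoc, Real.sqrt_div_self', mul_one_div]

section Aux

variable (T : lp (fun _ : ℕ => ℂ) 2 →L[ℂ] lp (fun _ : ℕ => ℂ) 2)
  (hT : ∀ x : lp (fun _ : ℕ => ℂ) 2,
      (T x : ℕ → ℂ) 0 = 0 ∧
      ∀ n : ℕ, (T x : ℕ → ℂ) (n + 1) =
        (Real.exp (1 / Real.sqrt ((n : ℝ) + 1)) : ℂ) * (x : ℕ → ℂ) n)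

include hT in
lemma stmt19_pow_apply (k : ℕ) (x : lp (fun _ : ℕ => ℂ) 2) :
    (∀ n : ℕ, ((T ^ k) x : ℕ → ℂ) (n + k) =
      (Real.exp (stmt19c k n) : ℂ) * (x : ℕ → ℂ) n) ∧
    (∀ m : ℕ, m < k → ((T ^ k) x : ℕ → ℂ) m = 0) := by
  induction k with
  | zero => simp [stmt19c]
  | succ k ih =>
    have hpow : (T ^ (k+1)) x = T ((T ^ k) x) := by
      rw [pow_succ']; rfl
    obtain ⟨ih1, ih2⟩ := ih
    constructor
    · intro n
      have : n + (k+1) = (n + k) + 1 := by omega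
      rw [hpow, this, (hT ((T ^ k) x)).2 (n+k), ih1 n]
      have hc : stmt19c (k+1) n = stmt19c k n + 1 / Real.sqrt ((n:ℝ) + (k:ℝ) + 1) := by
        simp [stmt19c, Finset.sum_range_succ]
      rw [hc, Real.exp_add]
      push_cast
      ring
    · intro m hm
      rw [hpow]
      match m with
      | 0 => exact (hT ((T ^ k) x)).1
      | (j+1) =>
        rw [(hT ((T ^ k) x)).2 j, ih2 j (by omega), mul_zero]

include hT in
lemma stmt19_norm_pow_eq (k : ℕ) : ‖T ^ k‖ = Real.exp (stmt19S k) := by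
  have hq : (0:ℝ) < (2 : ℝ≥0∞).toReal := by norm_num
  have hq2 : (2 : ℝ≥0∞).toReal = 2 := by norm_num
  apply le_antisymm
  · apply ContinuousLinearMap.opNorm_le_bound _ (by positivity)
    intro x
    set E := Real.exp (stmt19S k) with hE
    have hE0 : 0 < E := Real.exp_pos _
    apply lp.norm_le_of_forall_sum_le hq (by positivity)
    intro s
    set y := (T ^ k) x with hy
    have hzero : ∀ i ∈ s, ‖(y : ℕ → ℂ) i‖ ^ (2:ℝ≥0∞).toReal ≠ 0 → k ≤ i := by
      intro i _ hne
      by_contra hlt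
      rw [(stmt19_pow_apply T hT k x).2 i (by omega)] at hne
      simp [hq2] at hne
    rw [← Finset.sum_filter_of_ne hzero]
    have hstep : ∀ i ∈ s.filter (fun i => k ≤ i),
        ‖(y : ℕ → ℂ) i‖ ^ (2:ℝ≥0∞).toReal ≤ (E * ‖(x : ℕ → ℂ) (i - k)‖) ^ (2:ℝ≥0∞).toReal := by
      intro i hi
      have hki : k ≤ i := (Finset.mem_filter.mp hi).2
      have hik : i = (i - k) + k := by omega
      have hyi : (y : ℕ → ℂ) i = (Real.exp (stmt19c k (i-k)) : ℂ) * (x : ℕ → ℂ) (i-k) := by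
        conv_lhs => rw [hik]
        exact (stmt19_pow_apply T hT k x).1 (i - k)
      have hle2 : ‖(y : ℕ → ℂ) i‖ ≤ E * ‖(x : ℕ → ℂ) (i - k)‖ := by
        rw [hyi, norm_mul, Complex.norm_real, Real.norm_eq_abs,
          abs_of_nonneg (Real.exp_pos _).le]
        exact mul_le_mul_of_nonneg_right
          (Real.exp_le_exp.mpr (stmt19c_le k (i-k))) (norm_nonneg _)
      exact Real.rpow_le_rpow (norm_nonneg _) hle2 (by rw [hq2]; norm_num)
    refine le_trans (Finset.sum_le_sum hstep) ?_
    have himg : ∑ i ∈ s.filter (fun i => k ≤ i),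
        (E * ‖(x : ℕ → ℂ) (i - k)‖) ^ (2:ℝ≥0∞).toReal
        = ∑ j ∈ (s.filter (fun i => k ≤ i)).image (· - k),
          (E * ‖(x : ℕ → ℂ) j‖) ^ (2:ℝ≥0∞).toReal := by
      rw [Finset.sum_image]
      intro a ha b hb hab
      have : k ≤ a := (Finset.mem_filter.mp ha).2
      have : k ≤ b := (Finset.mem_filter.mp hb).2
      simp only at hab
      omega
    rw [himg]
    have hmul : ∀ j, (E * ‖(x : ℕ → ℂ) j‖) ^ (2:ℝ≥0∞).toReal
        = E ^ (2:ℝ≥0∞).toReal * ‖(x : ℕ → ℂ) j‖ ^ (2:ℝ≥0∞).toReal := by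
      intro j; exact Real.mul_rpow hE0.le (norm_nonneg _)
    simp only [hmul]
    rw [← Finset.mul_sum]
    have hle := lp.sum_rpow_le_norm_rpow hq x ((s.filter (fun i => k ≤ i)).image (· - k))
    have : ∑ j ∈ (s.filter (fun i => k ≤ i)).image (· - k),
        ‖(x : ℕ → ℂ) j‖ ^ (2:ℝ≥0∞).toReal ≤ ‖x‖ ^ (2:ℝ≥0∞).toReal := by
      simpa [hq2, Real.rpow_natCast] using hle
    calc E ^ (2:ℝ≥0∞).toReal * ∑ j ∈ (s.filter (fun i => k ≤ i)).image (· - k),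
          ‖(x : ℕ → ℂ) j‖ ^ (2:ℝ≥0∞).toReal
        ≤ E ^ (2:ℝ≥0∞).toReal * ‖x‖ ^ (2:ℝ≥0∞).toReal := by
          apply mul_le_mul_of_nonneg_left this
          rw [hq2]
          positivity
      _ = (E * ‖x‖) ^ (2:ℝ≥0∞).toReal := (Real.mul_rpow hE0.le (norm_nonneg _)).symm
  · set x0 : lp (fun _ : ℕ => ℂ) 2 := lp.single 2 0 (1:ℂ) with hx0
    have hnx0 : ‖x0‖ = 1 := by
      have := lp.norm_single (E := fun _ : ℕ => ℂ) (p := 2) (by norm_num) 0 (1:ℂ)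
      simpa [hx0] using this
    have hTx0 : (T ^ k) x0 = lp.single 2 k ((Real.exp (stmt19S k) : ℂ)) := by
      apply lp.ext
      funext n
      rcases lt_or_ge n k with hn | hn
      · rw [(stmt19_pow_apply T hT k x0).2 n hn, lp.single_apply_ne 2 k _ (by omega : n ≠ k)]
      · have : n = (n - k) + k := by omega
        rw [this, (stmt19_pow_apply T hT k x0).1 (n - k)]
        rcases Nat.eq_zero_or_pos (n - k) with h0 | h0
        · rw [h0]
          simp only [zero_add]
          rw [lp.single_apply_self, lp.single_apply_self, stmt19c_zero, mul_one]
        · rw [lp.single_apply_ne 2 0 _ (by omega : n - k ≠ 0),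
            lp.single_apply_ne 2 k _ (by omega : n - k + k ≠ k), mul_zero]
    have hnorm : ‖(T ^ k) x0‖ = Real.exp (stmt19S k) := by
      rw [hTx0]
      have := lp.norm_single (E := fun _ : ℕ => ℂ) (p := 2) (by norm_num) k ((Real.exp (stmt19S k) : ℂ))
      simpa [Complex.norm_real, abs_of_nonneg (Real.exp_pos _).le] using this
    calc Real.exp (stmt19S k) = ‖(T ^ k) x0‖ := hnorm.symm
      _ ≤ ‖T ^ k‖ * ‖x0‖ := ContinuousLinearMap.le_opNorm _ _
      _ = ‖T ^ k‖ := by rw [hnx0, mul_one]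

end Aux

lemma stmt19_Icc_sum (k : ℕ) :
    ∑ j ∈ Finset.Icc 1 k, 1 / Real.sqrt (j : ℝ) = stmt19S k := by
  induction k with
  | zero => simp [stmt19S]
  | succ k ih =>
    rw [Finset.sum_Icc_succ_top (by omega : 1 ≤ k + 1), ih]
    simp only [stmt19S, Finset.sum_range_succ]
    push_cast
    ring

/-- Example 6.3: let `T` be the unilateral weighted shift on `ℓ² = ℓ²(ℕ, ℂ)` with weights
`e^{1/√(n+1)}`, i.e. `(Tx)(0) = 0` and `(Tx)(n+1) = e^{1/√(n+1)} x(n)`.  Then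
`‖T^k‖ = e^{∑_{j=1}^{k} 1/√j}` for every `k ≥ 1`, the spectral radius of `T` equals `1`,
`‖T^k‖/k^α → +∞` for every `α ∈ (0, +∞)`, and for no `m ∈ ℕ` is `(‖T^n‖/n^m)_{n≥1}`
bounded from above. -/
theorem stmt19 (T : lp (fun _ : ℕ => ℂ) 2 →L[ℂ] lp (fun _ : ℕ => ℂ) 2)
    (hT : ∀ x : lp (fun _ : ℕ => ℂ) 2,
      (T x : ℕ → ℂ) 0 = 0 ∧
      ∀ n : ℕ, (T x : ℕ → ℂ) (n + 1) =
        (Real.exp (1 / Real.sqrt ((n : ℝ) + 1)) : ℂ) * (x : ℕ → ℂ) n) :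
    (∀ k : ℕ, 1 ≤ k → ‖T ^ k‖ = Real.exp (∑ j ∈ Finset.Icc 1 k, 1 / Real.sqrt (j : ℝ))) ∧
    spectralRadius ℂ T = 1 ∧
    (∀ α : ℝ, 0 < α →
      Filter.Tendsto (fun k : ℕ => ‖T ^ k‖ / (k : ℝ) ^ α) Filter.atTop Filter.atTop) ∧
    ∀ m : ℕ, ¬∃ M : ℝ, ∀ n : ℕ, 1 ≤ n → ‖T ^ n‖ / (n : ℝ) ^ m ≤ M := by
  have hnorm : ∀ k : ℕ, ‖T ^ k‖ = Real.exp (stmt19S k) := stmt19_norm_pow_eq T hT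
  have part1 : ∀ k : ℕ, 1 ≤ k →
      ‖T ^ k‖ = Real.exp (∑ j ∈ Finset.Icc 1 k, 1 / Real.sqrt (j : ℝ)) := by
    intro k _
    rw [hnorm k, stmt19_Icc_sum k]
  have part2 : spectralRadius ℂ T = 1 := by
    have hgel := spectrum.pow_norm_pow_one_div_tendsto_nhds_spectralRadius T
    have hreal : Tendsto (fun n : ℕ => ‖T ^ n‖ ^ (1 / (n:ℝ))) atTop (nhds 1) := by
      have heq : ∀ n : ℕ, ‖T ^ n‖ ^ (1 / (n:ℝ)) = Real.exp (stmt19S n * (1 / n)) := by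
        intro n
        rw [hnorm n, ← Real.exp_mul]
      simp only [heq]
      have : Tendsto (fun n : ℕ => stmt19S n * (1 / n)) atTop (nhds 0) := by
        simpa [div_eq_mul_inv, mul_one_div] using stmt19S_div_tendsto
      simpa [Function.comp_def] using (Real.continuous_exp.tendsto 0).comp this
    have h2 : Tendsto (fun n : ℕ => ENNReal.ofReal (‖T ^ n‖ ^ (1 / (n:ℝ)))) atTop
        (nhds (ENNReal.ofReal 1)) :=
      (ENNReal.continuous_ofReal.tendsto 1).comp hreal
    rw [ENNReal.ofReal_one] at h2
    exact tendsto_nhds_unique hgel h2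
  have part3 : ∀ α : ℝ, 0 < α →
      Tendsto (fun k : ℕ => ‖T ^ k‖ / (k : ℝ) ^ α) atTop atTop := by
    intro α hα
    have hg : Tendsto (fun k : ℕ => Real.exp (Real.sqrt k) / (Real.sqrt k) ^ (2*α))
        atTop atTop :=
      (tendsto_exp_div_rpow_atTop (2*α)).comp stmt19_sqrt_tendsto
    apply tendsto_atTop_mono' atTop ?_ hg
    filter_upwards [eventually_ge_atTop 1] with k hk
    have hk' : (0:ℝ) < k := by exact_mod_cast hk
    have hs : (Real.sqrt k) ^ (2*α) = (k:ℝ) ^ α := by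
      rw [Real.sqrt_eq_rpow, ← Real.rpow_mul hk'.le]
      congr 1
      ring
    rw [hs, hnorm k]
    gcongr
    exact stmt19_sqrt_le_S k
  refine ⟨part1, part2, part3, ?_⟩
  rintro m ⟨M, hM⟩
  have h3 := part3 ((m:ℝ) + 1) (by positivity)
  obtain ⟨n, hn1, hn2⟩ :=
    ((eventually_ge_atTop 1).and (h3.eventually (eventually_ge_atTop (M+1)))).exists
  have hn1' : (1:ℝ) ≤ (n:ℝ) := by exact_mod_cast hn1
  have hden : (0:ℝ) < (n:ℝ) ^ m := by positivity
  have hle : (n:ℝ) ^ m ≤ (n:ℝ) ^ ((m:ℝ) + 1) := by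
    rw [← Real.rpow_natCast (n:ℝ) m]
    exact Real.rpow_le_rpow_of_exponent_le hn1' (by linarith)
  have hdd : ‖T ^ n‖ / (n:ℝ) ^ ((m:ℝ) + 1) ≤ ‖T ^ n‖ / (n:ℝ) ^ m :=
    div_le_div_of_nonneg_left (norm_nonneg _) hden hle
  have := hM n hn1
  linarith
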